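/- Let 𝓑 be a symmetric N×N real matrix, 𝓡 a symmetric M×M real matrix, M_cross an N×M real matrix with total cross degree d_T := Σᵢⱼ (M_cross)ᵢⱼ, and suppose β, ρ solve the two-network frustrated Kuramoto system and in addition all Blue phases coincide, βᵢ(t) = B(t) for all i, and all Red phases coincide, ρⱼ(t) = P(t) for all j. Then α(t) := B(t) − P(t) satisfies exactly α'(t) = ω̄ − ν̄ + S(φ,ψ)·cos α(t) − C(φ,ψ)·sin α(t), where C(φ,ψ) = (d_T·ζ_BR·cos φ)/N + (d_T·ζ_RB·cos ψ)/M and S(φ,ψ) = (d_T·ζ_BR·sin φ)/N − (d_T·ζ_RB·sin ψ)/M. -/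

import Mathlib

/-- If β, ρ solve the two-network frustrated Kuramoto system on
symmetric networks 𝓑 and 𝓡, and all Blue phases coincide (βᵢ(t) = B(t)) and all
Red phases coincide (ρⱼ(t) = P(t)), then α(t) = B(t) − P(t) satisfies exactly
α'(t) = ω̄ − ν̄ + S(φ,ψ)·cos α(t) − C(φ,ψ)·sin α(t), where
C(φ,ψ) = d_T·ζ_BR·cos φ/N + d_T·ζ_RB·cos ψ/M and
S(φ,ψ) = d_T·ζ_BR·sin φ/N − d_T·ζ_RB·sin ψ/M, with d_T = Σᵢⱼ (M_cross)ᵢⱼ. -/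
theorem locked_centroid_difference_ode (N M : ℕ) (hN : 0 < N) (hM : 0 < M)
    (Bm : Matrix (Fin N) (Fin N) ℝ) (hBm : Bm.IsSymm)
    (Rm : Matrix (Fin M) (Fin M) ℝ) (hRm : Rm.IsSymm)
    (Mc : Matrix (Fin N) (Fin M) ℝ)
    (ω : Fin N → ℝ) (ν : Fin M → ℝ) (σB σR ζBR ζRB φ ψ : ℝ)
    (β : ℝ → Fin N → ℝ) (ρ : ℝ → Fin M → ℝ) (B P : ℝ → ℝ)
    (hβd : ∀ i, Differentiable ℝ (fun t => β t i))
    (hρd : ∀ i, Differentiable ℝ (fun t => ρ t i))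
    (hβ : ∀ i t, deriv (fun s => β s i) t =
      ω i + σB * ∑ j, Bm i j * Real.sin (β t j - β t i)
        + ζBR * ∑ j, Mc i j * Real.sin (ρ t j + φ - β t i))
    (hρ : ∀ i t, deriv (fun s => ρ s i) t =
      ν i + σR * ∑ j, Rm i j * Real.sin (ρ t j - ρ t i)
        + ζRB * ∑ j, Mc j i * Real.sin (β t j + ψ - ρ t i))
    (hBc : ∀ t i, β t i = B t)
    (hPc : ∀ t j, ρ t j = P t) :
    ∀ t, deriv (fun s => B s - P s) t =
      ((1 / (N : ℝ)) * ∑ i, ω i - (1 / (M : ℝ)) * ∑ i, ν i)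
        + ((∑ i, ∑ j, Mc i j) * ζBR * Real.sin φ / (N : ℝ)
            - (∑ i, ∑ j, Mc i j) * ζRB * Real.sin ψ / (M : ℝ)) * Real.cos (B t - P t)
        - ((∑ i, ∑ j, Mc i j) * ζBR * Real.cos φ / (N : ℝ)
            + (∑ i, ∑ j, Mc i j) * ζRB * Real.cos ψ / (M : ℝ)) * Real.sin (B t - P t) := by
  intro t
  have i0 : Fin N := ⟨0, hN⟩
  have j0 : Fin M := ⟨0, hM⟩
  have hBfun : B = fun s => β s i0 := funext fun s => (hBc s i0).symm
  have hPfun : P = fun s => ρ s j0 := funext fun s => (hPc s j0).symm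
  have hBd : Differentiable ℝ B := hBfun ▸ hβd i0
  have hPd : Differentiable ℝ P := hPfun ▸ hρd j0
  have hNne : (N : ℝ) ≠ 0 := Nat.cast_ne_zero.mpr hN.ne'
  have hMne : (M : ℝ) ≠ 0 := Nat.cast_ne_zero.mpr hM.ne'
  have hBi : ∀ i, deriv (fun s => β s i) t
      = ω i + ζBR * ((∑ j, Mc i j) * Real.sin (P t + φ - B t)) := by
    intro i
    rw [hβ]
    have h0 : (∑ j, Bm i j * Real.sin (β t j - β t i)) = 0 := by
      apply Finset.sum_eq_zero; intro j _; rw [hBc t j, hBc t i]; simp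
    have h1 : (∑ j, Mc i j * Real.sin (ρ t j + φ - β t i))
        = (∑ j, Mc i j) * Real.sin (P t + φ - B t) := by
      rw [Finset.sum_mul]
      exact Finset.sum_congr rfl fun j _ => by rw [hPc t j, hBc t i]
    rw [h0, h1]; ring
  have hRi : ∀ i, deriv (fun s => ρ s i) t
      = ν i + ζRB * ((∑ j, Mc j i) * Real.sin (B t + ψ - P t)) := by
    intro i
    rw [hρ]
    have h0 : (∑ j, Rm i j * Real.sin (ρ t j - ρ t i)) = 0 := by
      apply Finset.sum_eq_zero; intro j _; rw [hPc t j, hPc t i]; simp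
    have h1 : (∑ j, Mc j i * Real.sin (β t j + ψ - ρ t i))
        = (∑ j, Mc j i) * Real.sin (B t + ψ - P t) := by
      rw [Finset.sum_mul]
      exact Finset.sum_congr rfl fun j _ => by rw [hBc t j, hPc t i]
    rw [h0, h1]; ring
  have hdBeq : ∀ i : Fin N, deriv (fun s => β s i) t = deriv B t := by
    intro i
    congr 1
    exact funext fun s => by rw [hBc s i]
  have hdPeq : ∀ i : Fin M, deriv (fun s => ρ s i) t = deriv P t := by
    intro i
    congr 1
    exact funext fun s => by rw [hPc s i]
  have hsumB : (N : ℝ) * deriv B t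
      = (∑ i, ω i) + ζBR * ((∑ i, ∑ j, Mc i j) * Real.sin (P t + φ - B t)) := by
    calc (N : ℝ) * deriv B t = ∑ _i : Fin N, deriv B t := by
          simp [Finset.sum_const, mul_comm]
      _ = ∑ i : Fin N, (ω i + ζBR * ((∑ j, Mc i j) * Real.sin (P t + φ - B t))) := by
          refine Finset.sum_congr rfl fun i _ => ?_
          rw [← hdBeq i, hBi i]
      _ = (∑ i, ω i) + ζBR * ((∑ i, ∑ j, Mc i j) * Real.sin (P t + φ - B t)) := by
          rw [Finset.sum_add_distrib, ← Finset.mul_sum, ← Finset.sum_mul]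
  have hsumP : (M : ℝ) * deriv P t
      = (∑ i, ν i) + ζRB * ((∑ i, ∑ j, Mc i j) * Real.sin (B t + ψ - P t)) := by
    calc (M : ℝ) * deriv P t = ∑ _i : Fin M, deriv P t := by
          simp [Finset.sum_const, mul_comm]
      _ = ∑ i : Fin M, (ν i + ζRB * ((∑ j, Mc j i) * Real.sin (B t + ψ - P t))) := by
          refine Finset.sum_congr rfl fun i _ => ?_
          rw [← hdPeq i, hRi i]
      _ = (∑ i, ν i) + ζRB * ((∑ i, ∑ j, Mc i j) * Real.sin (B t + ψ - P t)) := by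
          rw [Finset.sum_add_distrib, ← Finset.mul_sum, ← Finset.sum_mul]
          congr 3
          exact Finset.sum_comm
  have hdB : deriv B t
      = ((∑ i, ω i) + ζBR * ((∑ i, ∑ j, Mc i j) * Real.sin (P t + φ - B t))) / N := by
    field_simp [← hsumB]
    linear_combination hsumB
  have hdP : deriv P t
      = ((∑ i, ν i) + ζRB * ((∑ i, ∑ j, Mc i j) * Real.sin (B t + ψ - P t))) / M := by
    field_simp [← hsumP]
    linear_combination hsumP
  have hsin1 : Real.sin (P t + φ - B t)
      = Real.sin φ * Real.cos (B t - P t) - Real.cos φ * Real.sin (B t - P t) := by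
    rw [show P t + φ - B t = φ - (B t - P t) by ring, Real.sin_sub]
  have hsin2 : Real.sin (B t + ψ - P t)
      = Real.sin ψ * Real.cos (B t - P t) + Real.cos ψ * Real.sin (B t - P t) := by
    rw [show B t + ψ - P t = ψ + (B t - P t) by ring, Real.sin_add]
  rw [deriv_fun_sub (hBd t) (hPd t), hdB, hdP, hsin1, hsin2]
  field_simp
  ring
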